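/- Fix τ ∈ (0,1) and let F be a class of distributions with finite first moments. Let f be a strictly convex, differentiable, F-integrable function. Then S(x,y) := |1_{y ≤ x} − τ| · (f(y) − f(x) − f'(x)(y−x)) is a strictly F-consistent scoring function for the τ-expectile; in particular the τ-expectile is elicitable. -/

import Mathlib

open MeasureTheory

section Aux
variable {f : ℝ → ℝ}

lemma my_tangent_le (hconv : StrictConvexOn ℝ Set.univ f) (hdiff : Differentiable ℝ f)
    (p q : ℝ) : f p + deriv f p * (q - p) ≤ f q := by
  rcases lt_trichotomy p q with h | h | h
  · have h1 := hconv.convexOn.deriv_le_slope (Set.mem_univ p) (Set.mem_univ q) h (hdiff p)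
    rw [slope_def_field] at h1
    have h2 := (le_div_iff₀ (by linarith)).mp h1
    linarith
  · simp [h]
  · have h1 := hconv.convexOn.slope_le_deriv (Set.mem_univ q) (Set.mem_univ p) h (hdiff p)
    rw [slope_def_field] at h1
    have h2 := (div_le_iff₀ (by linarith)).mp h1
    nlinarith

lemma my_tangent_lt (hconv : StrictConvexOn ℝ Set.univ f) (hdiff : Differentiable ℝ f)
    {p q : ℝ} (hpq : p ≠ q) : f p + deriv f p * (q - p) < f q := by
  rcases lt_or_gt_of_ne hpq with h | h
  · have h1 := hconv.deriv_lt_slope (Set.mem_univ p) (Set.mem_univ q) h (hdiff p)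
    rw [slope_def_field] at h1
    have h2 := (lt_div_iff₀ (by linarith)).mp h1
    linarith
  · have h1 := hconv.slope_lt_deriv (Set.mem_univ q) (Set.mem_univ p) h (hdiff p)
    rw [slope_def_field] at h1
    have h2 := (div_lt_iff₀ (by linarith)).mp h1
    nlinarith

lemma my_deriv_mono (hconv : StrictConvexOn ℝ Set.univ f) (hdiff : Differentiable ℝ f) :
    Monotone (deriv f) := fun p q h =>
  hconv.convexOn.monotoneOn_deriv (fun x _ => hdiff x) (Set.mem_univ p) (Set.mem_univ q) h

end Aux

lemma my_pointwise {f : ℝ → ℝ} (hconv : StrictConvexOn ℝ Set.univ f)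
    (hdiff : Differentiable ℝ f) {τ : ℝ} (hτ0 : 0 < τ) (hτ1 : τ < 1) (x t y : ℝ) :
    (f t - f x - deriv f x * (t - x)) * min τ (1 - τ)
      - (deriv f x - deriv f t) * (τ * max (y - t) 0 - (1 - τ) * max (t - y) 0)
    ≤ |(if y ≤ x then (1:ℝ) else 0) - τ| * (f y - f x - deriv f x * (y - x))
      - |(if y ≤ t then (1:ℝ) else 0) - τ| * (f y - f t - deriv f t * (y - t)) := by
  have h1 : |(1:ℝ) - τ| = 1 - τ := abs_of_pos (by linarith)
  have h2 : |(0:ℝ) - τ| = τ := by rw [zero_sub, abs_neg, abs_of_pos hτ0]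
  have hm1 : min τ (1 - τ) ≤ τ := min_le_left _ _
  have hm2 : min τ (1 - τ) ≤ 1 - τ := min_le_right _ _
  have ha : 0 ≤ f t - f x - deriv f x * (t - x) := by
    have := my_tangent_le hconv hdiff x t; linarith
  have hBx : 0 ≤ f y - f x - deriv f x * (y - x) := by
    have := my_tangent_le hconv hdiff x y; linarith
  rcases le_or_gt y x with hyx | hyx <;> rcases le_or_gt y t with hyt | hyt
  · -- y ≤ x, y ≤ t
    rw [if_pos hyx, if_pos hyt, h1, max_eq_right (by linarith), max_eq_left (by linarith)]
    nlinarith [mul_nonneg ha (by linarith : (0:ℝ) ≤ 1 - τ - min τ (1 - τ))]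
  · -- t < y ≤ x
    rw [if_pos hyx, if_neg (not_le.mpr hyt), h1, h2,
      max_eq_left (by linarith), max_eq_right (by linarith)]
    have hh : f y - f t + deriv f x * (t - y) ≤ 0 := by
      have h3 := my_tangent_le hconv hdiff y t
      have h4 : deriv f y ≤ deriv f x := my_deriv_mono hconv hdiff hyx
      nlinarith
    rcases le_or_gt τ (1/2) with h5 | h5
    · nlinarith [mul_nonneg (by linarith : (0:ℝ) ≤ 1 - 2*τ) hBx,
        mul_nonneg ha (by linarith : (0:ℝ) ≤ τ - min τ (1 - τ))]
    · nlinarith [mul_nonneg (by linarith : (0:ℝ) ≤ 2*τ - 1) (by linarith : (0:ℝ) ≤ -(f y - f t + deriv f x * (t - y))),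
        mul_nonneg ha (by linarith : (0:ℝ) ≤ 1 - τ - min τ (1 - τ))]
  · -- x < y ≤ t
    rw [if_neg (not_le.mpr hyx), if_pos hyt, h2, h1,
      max_eq_right (by linarith), max_eq_left (by linarith)]
    have hh : f y - f t + deriv f x * (t - y) ≤ 0 := by
      have h3 := my_tangent_le hconv hdiff y t
      have h4 : deriv f x ≤ deriv f y := my_deriv_mono hconv hdiff hyx.le
      nlinarith
    rcases le_or_gt τ (1/2) with h5 | h5
    · nlinarith [mul_nonneg (by linarith : (0:ℝ) ≤ 1 - 2*τ) (by linarith : (0:ℝ) ≤ -(f y - f t + deriv f x * (t - y))),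
        mul_nonneg ha (by linarith : (0:ℝ) ≤ τ - min τ (1 - τ))]
    · nlinarith [mul_nonneg (by linarith : (0:ℝ) ≤ 2*τ - 1) hBx,
        mul_nonneg ha (by linarith : (0:ℝ) ≤ 1 - τ - min τ (1 - τ))]
  · -- x < y, t < y
    rw [if_neg (not_le.mpr hyx), if_neg (not_le.mpr hyt), h2,
      max_eq_left (by linarith), max_eq_right (by linarith)]
    nlinarith [mul_nonneg ha (by linarith : (0:ℝ) ≤ τ - min τ (1 - τ))]

/-- Strict consistency of asymmetric Bregman scoring functions for the τ-expectile;
in particular the τ-expectile is elicitable. -/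
theorem expectile_elicitable (τ : ℝ) (hτ : τ ∈ Set.Ioo (0:ℝ) 1)
    (𝓕 : Set (Measure ℝ)) (hprob : ∀ F ∈ 𝓕, IsProbabilityMeasure F)
    (hmom : ∀ F ∈ 𝓕, Integrable id F)
    (T : Measure ℝ → ℝ)
    (hT : ∀ F ∈ 𝓕,
        τ * ∫ y, max (y - T F) 0 ∂F = (1 - τ) * ∫ y, max (T F - y) 0 ∂F)
    (f : ℝ → ℝ) (hconv : StrictConvexOn ℝ Set.univ f)
    (hdiff : Differentiable ℝ f)
    (hfint : ∀ F ∈ 𝓕, Integrable f F) :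
    (∀ x : ℝ, ∀ F ∈ 𝓕,
        ∫ y, |(if y ≤ T F then (1:ℝ) else 0) - τ| *
            (f y - f (T F) - deriv f (T F) * (y - T F)) ∂F
          ≤ ∫ y, |(if y ≤ x then (1:ℝ) else 0) - τ| *
              (f y - f x - deriv f x * (y - x)) ∂F) ∧
    (∀ x : ℝ, ∀ F ∈ 𝓕,
        ∫ y, |(if y ≤ x then (1:ℝ) else 0) - τ| *
            (f y - f x - deriv f x * (y - x)) ∂F
          = ∫ y, |(if y ≤ T F then (1:ℝ) else 0) - τ| *
              (f y - f (T F) - deriv f (T F) * (y - T F)) ∂F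
        → x = T F) := by
  obtain ⟨hτ0, hτ1⟩ := hτ
  have key : ∀ F ∈ 𝓕, ∀ x : ℝ,
      (∫ y, |(if y ≤ T F then (1:ℝ) else 0) - τ| *
          (f y - f (T F) - deriv f (T F) * (y - T F)) ∂F)
        + (f (T F) - f x - deriv f x * (T F - x)) * min τ (1 - τ)
      ≤ ∫ y, |(if y ≤ x then (1:ℝ) else 0) - τ| *
          (f y - f x - deriv f x * (y - x)) ∂F := by
    intro F hF x
    haveI := hprob F hF
    set t := T F with ht
    have hid := hmom F hF
    have hint : ∀ z : ℝ, Integrable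
        (fun y => |(if y ≤ z then (1:ℝ) else 0) - τ| *
          (f y - f z - deriv f z * (y - z))) F := by
      intro z
      have h1 : Integrable (fun y : ℝ => deriv f z * (y - z)) F :=
        (hid.sub (integrable_const z)).const_mul (deriv f z)
      have hB : Integrable (fun y => f y - f z - deriv f z * (y - z)) F :=
        ((hfint F hF).sub (integrable_const (f z))).sub h1
      refine hB.bdd_mul (c := 1) ?_ (Filter.Eventually.of_forall fun y => ?_)
      · refine (Measurable.abs ?_).aestronglyMeasurable
        exact (Measurable.ite measurableSet_Iic measurable_const measurable_const).sub
          measurable_const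
      · rw [Real.norm_eq_abs, abs_abs]
        split_ifs <;> rw [abs_sub_comm] <;>
          [rw [abs_of_nonpos (by linarith)]; rw [abs_of_nonneg (by linarith)]] <;> linarith
    have hφ1 : Integrable (fun y => max (y - t) 0) F := (hid.sub (integrable_const t)).pos_part
    have hφ2 : Integrable (fun y => max (t - y) 0) F := ((integrable_const t).sub hid).pos_part
    have hφ : Integrable (fun y => τ * max (y - t) 0 - (1 - τ) * max (t - y) 0) F :=
      (hφ1.const_mul τ).sub (hφ2.const_mul (1 - τ))
    have hφ0 : ∫ y, (τ * max (y - t) 0 - (1 - τ) * max (t - y) 0) ∂F = 0 := by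
      rw [integral_sub (hφ1.const_mul τ) (hφ2.const_mul (1 - τ)),
        integral_const_mul, integral_const_mul, hT F hF, sub_self]
    set a := f t - f x - deriv f x * (t - x) with ha_def
    have hpw : ∀ y : ℝ,
        (fun y => a * min τ (1 - τ) - (deriv f x - deriv f t) *
          (τ * max (y - t) 0 - (1 - τ) * max (t - y) 0)) y ≤
        (fun y => |(if y ≤ x then (1:ℝ) else 0) - τ| * (f y - f x - deriv f x * (y - x))
          - |(if y ≤ t then (1:ℝ) else 0) - τ| * (f y - f t - deriv f t * (y - t))) y :=
      fun y => my_pointwise hconv hdiff hτ0 hτ1 x t y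
    have hI1 : Integrable (fun y => a * min τ (1 - τ) - (deriv f x - deriv f t) *
        (τ * max (y - t) 0 - (1 - τ) * max (t - y) 0)) F :=
      (integrable_const _).sub (hφ.const_mul _)
    have hI2 : Integrable (fun y =>
        |(if y ≤ x then (1:ℝ) else 0) - τ| * (f y - f x - deriv f x * (y - x))
          - |(if y ≤ t then (1:ℝ) else 0) - τ| * (f y - f t - deriv f t * (y - t))) F :=
      (hint x).sub (hint t)
    have hmono : (∫ y, (a * min τ (1 - τ) - (deriv f x - deriv f t) *
          (τ * max (y - t) 0 - (1 - τ) * max (t - y) 0)) ∂F)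
        ≤ ∫ y, (|(if y ≤ x then (1:ℝ) else 0) - τ| * (f y - f x - deriv f x * (y - x))
          - |(if y ≤ t then (1:ℝ) else 0) - τ| * (f y - f t - deriv f t * (y - t))) ∂F :=
      integral_mono hI1 hI2 hpw
    rw [integral_sub (integrable_const _) (hφ.const_mul _),
      integral_sub (hint x) (hint t), integral_const, probReal_univ,
      one_smul, integral_const_mul, hφ0, mul_zero, sub_zero] at hmono
    linarith
  constructor
  · intro x F hF
    have h := key F hF x
    have ha : 0 ≤ f (T F) - f x - deriv f x * (T F - x) := by
      have := my_tangent_le hconv hdiff x (T F); linarith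
    nlinarith [mul_nonneg ha (le_min hτ0.le (by linarith : (0:ℝ) ≤ 1 - τ))]
  · intro x F hF heq
    by_contra hne
    have ha : 0 < f (T F) - f x - deriv f x * (T F - x) := by
      have := my_tangent_lt hconv hdiff hne; linarith
    have hm : 0 < min τ (1 - τ) := lt_min hτ0 (by linarith)
    have h := key F hF x
    nlinarith
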